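/- arXiv:1809.02901 — 2 statements merged into one kernel-verified Lean document; each statement's English description precedes it below -/
import Mathlib

section
/- If A₁ ≠ A₂ both lie in the domain of Ω (i.e. Z[A₁], Z[A₂] < ∞) and θ ∈ (0,1), then Ω[θA₁+(1-θ)A₂] > θΩ[A₁] + (1-θ)Ω[A₂], i.e. Ω is strictly concave on its domain, provided U is such that Z is finite on the segment. -/
open MeasureTheory Filter Matrix
open scoped ENNReal Classical

noncomputable def quadForm {N : ℕ} (A : Matrix (Fin N) (Fin N) ℝ) (x : Fin N → ℝ) : ℝ :=
  ∑ i, ∑ j, A i j * x i * x j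

noncomputable def gibbsZ (N : ℕ) (A : Matrix (Fin N) (Fin N) ℝ) (U : (Fin N → ℝ) → ℝ) : ℝ≥0∞ :=
  ∫⁻ x : Fin N → ℝ, ENNReal.ofReal (Real.exp (-(1/2) * quadForm A x - U x))

noncomputable def freeEnergy (N : ℕ) (A : Matrix (Fin N) (Fin N) ℝ) (U : (Fin N → ℝ) → ℝ) : EReal :=
  if gibbsZ N A U = ⊤ then ⊥ else ((- Real.log (gibbsZ N A U).toReal : ℝ) : EReal)

noncomputable def diffEntropy {d : ℕ} (μ : Measure (Fin d → ℝ)) : EReal :=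
  if μ ≪ (volume : Measure (Fin d → ℝ)) then
    ((∫⁻ x, ENNReal.ofReal (-(Real.log ((μ.rnDeriv volume x).toReal))) ∂μ : ℝ≥0∞) : EReal)
      - ((∫⁻ x, ENNReal.ofReal (Real.log ((μ.rnDeriv volume x).toReal)) ∂μ : ℝ≥0∞) : EReal)
  else ⊥

noncomputable def erealIntegral {d : ℕ} (f : (Fin d → ℝ) → ℝ) (μ : Measure (Fin d → ℝ)) : EReal :=
  ((∫⁻ x, ENNReal.ofReal (f x) ∂μ : ℝ≥0∞) : EReal) - ((∫⁻ x, ENNReal.ofReal (-f x) ∂μ : ℝ≥0∞) : EReal)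

noncomputable def secondMoment {d : ℕ} (μ : Measure (Fin d → ℝ)) : Matrix (Fin d) (Fin d) ℝ :=
  Matrix.of fun i j => ∫ x, x i * x j ∂μ

noncomputable def covMatrix {d : ℕ} (μ : Measure (Fin d → ℝ)) : Matrix (Fin d) (Fin d) ℝ :=
  Matrix.of fun i j => (∫ x, x i * x j ∂μ) - (∫ x, x i ∂μ) * (∫ x, x j ∂μ)

noncomputable def gaussDensity {d : ℕ} (m : Fin d → ℝ) (S : Matrix (Fin d) (Fin d) ℝ)
    (x : Fin d → ℝ) : ℝ :=
  ((2 * Real.pi) ^ d * S.det) ^ (-(1/2 : ℝ)) * Real.exp (-(1/2) * quadForm S⁻¹ (x - m))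

def IsGaussianPD {d : ℕ} (μ : Measure (Fin d → ℝ)) : Prop :=
  ∃ (m : Fin d → ℝ) (S : Matrix (Fin d) (Fin d) ℝ), S.PosDef ∧
    μ = volume.withDensity (fun x => ENNReal.ofReal (gaussDensity m S x))

noncomputable def relEntropy {α : Type*} [MeasurableSpace α] (ν μ : Measure α) : EReal :=
  if μ ≪ ν then
    ((∫⁻ x, ENNReal.ofReal (-(Real.log ((μ.rnDeriv ν x).toReal))) ∂μ : ℝ≥0∞) : EReal)
      - ((∫⁻ x, ENNReal.ofReal (Real.log ((μ.rnDeriv ν x).toReal)) ∂μ : ℝ≥0∞) : EReal)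
  else ⊥

noncomputable def lwF (d : ℕ) (U : (Fin d → ℝ) → ℝ) (G : Matrix (Fin d) (Fin d) ℝ) : EReal :=
  sSup ((fun μ => diffEntropy μ - erealIntegral U μ) ''
    {μ : Measure (Fin d → ℝ) | IsProbabilityMeasure μ ∧
      Integrable (fun x => ‖x‖ ^ 2) μ ∧ secondMoment μ = G})

noncomputable def lwPhi (d : ℕ) (U : (Fin d → ℝ) → ℝ) (G : Matrix (Fin d) (Fin d) ℝ) : EReal :=
  2 * lwF d U G - ((Real.log G.det : ℝ) : EReal)
    - ((d * Real.log (2 * Real.pi * Real.exp 1) : ℝ) : EReal)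

def WeakGrowth (N : ℕ) (U : (Fin N → ℝ) → ℝ) : Prop :=
  Measurable U ∧ (∃ C : ℝ, ∀ x, 0 ≤ U x + C * (1 + ‖x‖ ^ 2)) ∧
    IsOpen {A : Matrix (Fin N) (Fin N) ℝ | gibbsZ N A U ≠ ⊤}

lemma quadForm_sub {N : ℕ} (A B : Matrix (Fin N) (Fin N) ℝ) (x : Fin N → ℝ) :
    quadForm (A - B) x = quadForm A x - quadForm B x := by
  simp [quadForm, Matrix.sub_apply, sub_mul, Finset.sum_sub_distrib]

lemma quadForm_combo {N : ℕ} (θ σ : ℝ) (A B : Matrix (Fin N) (Fin N) ℝ) (x : Fin N → ℝ) :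
    quadForm (θ • A + σ • B) x = θ * quadForm A x + σ * quadForm B x := by
  unfold quadForm
  rw [Finset.mul_sum, Finset.mul_sum, ← Finset.sum_add_distrib]
  refine Finset.sum_congr rfl fun i _ => ?_
  rw [Finset.mul_sum, Finset.mul_sum, ← Finset.sum_add_distrib]
  refine Finset.sum_congr rfl fun j _ => ?_
  simp only [Matrix.add_apply, Matrix.smul_apply, smul_eq_mul]
  ring

lemma quadForm_single {N : ℕ} (D : Matrix (Fin N) (Fin N) ℝ) (i : Fin N) :
    quadForm D (Pi.single i 1) = D i i := by
  simp [quadForm, Pi.single_apply, mul_ite, ite_mul, Finset.sum_ite_eq']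

lemma quadForm_single_add {N : ℕ} (D : Matrix (Fin N) (Fin N) ℝ) (i j : Fin N) (hij : i ≠ j) :
    quadForm D (Pi.single i 1 + Pi.single j 1) = D i i + D i j + D j i + D j j := by
  simp [quadForm, Pi.single_apply, mul_ite, ite_mul, mul_add, add_mul,
    Finset.sum_add_distrib, Finset.sum_ite_eq', hij, hij.symm]
  ring

lemma continuous_quadForm {N : ℕ} (A : Matrix (Fin N) (Fin N) ℝ) :
    Continuous (quadForm A) := by
  unfold quadForm
  exact continuous_finset_sum _ fun i _ => continuous_finset_sum _ fun j _ =>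
    ((continuous_const.mul (continuous_apply i)).mul (continuous_apply j))

lemma eq_zero_of_quadForm_const {N : ℕ} (D : Matrix (Fin N) (Fin N) ℝ) (hD : D.IsSymm)
    (κ : ℝ) (hq : ∀ x, quadForm D x = κ) : D = 0 := by
  have h0 : κ = 0 := by simpa [quadForm] using (hq 0).symm
  subst h0
  ext i j
  have hii := (hq (Pi.single i 1)).trans rfl
  rw [quadForm_single] at hii
  by_cases hij : i = j
  · subst hij; simpa using hii
  · have hjj := hq (Pi.single j 1)
    rw [quadForm_single] at hjj
    have hadd := hq (Pi.single i 1 + Pi.single j 1)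
    rw [quadForm_single_add D i j hij] at hadd
    have hsym : D j i = D i j := by
      have := congrFun (congrFun hD.eq i) j
      simpa [Matrix.transpose_apply] using this
    simp only [Matrix.zero_apply]
    linarith

lemma measurable_integrand {N : ℕ} (A : Matrix (Fin N) (Fin N) ℝ) {U : (Fin N → ℝ) → ℝ}
    (hU : Measurable U) :
    Measurable (fun x => ENNReal.ofReal (Real.exp (-(1/2) * quadForm A x - U x))) :=
  ENNReal.measurable_ofReal.comp (Real.measurable_exp.comp
    (((continuous_quadForm A).measurable.const_mul _).sub hU))

lemma volume_pi_ne_zero (N : ℕ) : (volume : Measure (Fin N → ℝ)) ≠ 0 := by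
  intro h0
  have : (0 : ℝ≥0∞) < volume (Set.univ : Set (Fin N → ℝ)) :=
    isOpen_univ.measure_pos volume ⟨0, trivial⟩
  rw [h0] at this
  simp at this

lemma gibbsZ_ne_zero {N : ℕ} (A : Matrix (Fin N) (Fin N) ℝ) {U : (Fin N → ℝ) → ℝ}
    (hU : Measurable U) : gibbsZ N A U ≠ 0 := by
  intro h
  rw [gibbsZ, lintegral_eq_zero_iff (measurable_integrand A hU)] at h
  have hne : (MeasureTheory.ae (volume : Measure (Fin N → ℝ))).NeBot :=
    ae_neBot.mpr (volume_pi_ne_zero N)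
  obtain ⟨x, hx⟩ := h.exists
  simp only [Pi.zero_apply, ENNReal.ofReal_eq_zero] at hx
  exact absurd hx (not_le.mpr (Real.exp_pos _))

set_option maxHeartbeats 1000000 in
/-- strict concavity of the free energy on its domain. -/
theorem freeEnergy_strictConcave (N : ℕ) (U : (Fin N → ℝ) → ℝ) (hU : Measurable U)
    (A₁ A₂ : Matrix (Fin N) (Fin N) ℝ) (h₁ : A₁.IsSymm) (h₂ : A₂.IsSymm)
    (hne : A₁ ≠ A₂)
    (hZ₁ : gibbsZ N A₁ U ≠ ⊤) (hZ₂ : gibbsZ N A₂ U ≠ ⊤)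
    (θ : ℝ) (hθ : θ ∈ Set.Ioo (0 : ℝ) 1)
    (hZθ : gibbsZ N (θ • A₁ + (1 - θ) • A₂) U ≠ ⊤) :
    ((θ : ℝ) : EReal) * freeEnergy N A₁ U + (((1 - θ : ℝ)) : EReal) * freeEnergy N A₂ U
      < freeEnergy N (θ • A₁ + (1 - θ) • A₂) U := by
  obtain ⟨hθ0, hθ1⟩ := hθ
  set Aθ := θ • A₁ + (1 - θ) • A₂ with hAθdef
  set c₁ := (gibbsZ N A₁ U).toReal with hc₁def
  set c₂ := (gibbsZ N A₂ U).toReal with hc₂def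
  set cθ := (gibbsZ N Aθ U).toReal with hcθdef
  have hc₁ : 0 < c₁ := ENNReal.toReal_pos (gibbsZ_ne_zero A₁ hU) hZ₁
  have hc₂ : 0 < c₂ := ENNReal.toReal_pos (gibbsZ_ne_zero A₂ hU) hZ₂
  have hcθ : 0 < cθ := ENNReal.toReal_pos (gibbsZ_ne_zero Aθ hU) hZθ
  set a : (Fin N → ℝ) → ℝ := fun x => -(1/2) * quadForm A₁ x - U x - Real.log c₁ with hadef
  set b : (Fin N → ℝ) → ℝ := fun x => -(1/2) * quadForm A₂ x - U x - Real.log c₂ with hbdef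
  have hma : Measurable fun x => ENNReal.ofReal (Real.exp (a x)) :=
    ENNReal.measurable_ofReal.comp (Real.measurable_exp.comp
      ((((continuous_quadForm A₁).measurable.const_mul _).sub hU).sub measurable_const))
  have hmb : Measurable fun x => ENNReal.ofReal (Real.exp (b x)) :=
    ENNReal.measurable_ofReal.comp (Real.measurable_exp.comp
      ((((continuous_quadForm A₂).measurable.const_mul _).sub hU).sub measurable_const))
  have hIa : ∫⁻ x, ENNReal.ofReal (Real.exp (a x)) = 1 := by
    have h1 : ∀ x, ENNReal.ofReal (Real.exp (a x))
        = ENNReal.ofReal (Real.exp (-(1/2) * quadForm A₁ x - U x)) * ENNReal.ofReal c₁⁻¹ := by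
      intro x
      rw [← ENNReal.ofReal_mul (Real.exp_pos _).le, hadef, Real.exp_sub, Real.exp_log hc₁,
        div_eq_mul_inv]
    simp_rw [h1]
    rw [lintegral_mul_const _ (measurable_integrand A₁ hU)]
    rw [show (∫⁻ x, ENNReal.ofReal (Real.exp (-(1/2) * quadForm A₁ x - U x))) = gibbsZ N A₁ U
      from rfl, ← ENNReal.ofReal_toReal hZ₁, ← hc₁def,
      ← ENNReal.ofReal_mul hc₁.le, mul_inv_cancel₀ hc₁.ne', ENNReal.ofReal_one]
  have hIb : ∫⁻ x, ENNReal.ofReal (Real.exp (b x)) = 1 := by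
    have h1 : ∀ x, ENNReal.ofReal (Real.exp (b x))
        = ENNReal.ofReal (Real.exp (-(1/2) * quadForm A₂ x - U x)) * ENNReal.ofReal c₂⁻¹ := by
      intro x
      rw [← ENNReal.ofReal_mul (Real.exp_pos _).le, hbdef, Real.exp_sub, Real.exp_log hc₂,
        div_eq_mul_inv]
    simp_rw [h1]
    rw [lintegral_mul_const _ (measurable_integrand A₂ hU)]
    rw [show (∫⁻ x, ENNReal.ofReal (Real.exp (-(1/2) * quadForm A₂ x - U x))) = gibbsZ N A₂ U
      from rfl, ← ENNReal.ofReal_toReal hZ₂, ← hc₂def,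
      ← ENNReal.ofReal_mul hc₂.le, mul_inv_cancel₀ hc₂.ne', ENNReal.ofReal_one]
  set Cθ := c₁ ^ θ * c₂ ^ (1 - θ) with hCθdef
  have hCθ : 0 < Cθ := mul_pos (Real.rpow_pos_of_pos hc₁ _) (Real.rpow_pos_of_pos hc₂ _)
  have hlogCθ : Real.log Cθ = θ * Real.log c₁ + (1 - θ) * Real.log c₂ := by
    rw [hCθdef, Real.log_mul (Real.rpow_pos_of_pos hc₁ _).ne' (Real.rpow_pos_of_pos hc₂ _).ne',
      Real.log_rpow hc₁, Real.log_rpow hc₂]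
  have hcomboexp : ∀ x, Real.exp (θ * a x + (1 - θ) * b x)
      = Real.exp (-(1/2) * quadForm Aθ x - U x) * Cθ⁻¹ := by
    intro x
    rw [← Real.exp_log (inv_pos.mpr hCθ), ← Real.exp_add, Real.log_inv, hlogCθ]
    congr 1
    rw [hAθdef, quadForm_combo, hadef, hbdef]
    ring
  have hIθ : ∫⁻ x, ENNReal.ofReal (Real.exp (θ * a x + (1 - θ) * b x))
      = gibbsZ N Aθ U * ENNReal.ofReal Cθ⁻¹ := by
    simp_rw [hcomboexp, ENNReal.ofReal_mul (Real.exp_pos _).le]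
    rw [lintegral_mul_const _ (measurable_integrand Aθ hU)]
    rfl
  set κ : ℝ := 2 * (Real.log c₂ - Real.log c₁) with hκdef
  set s : Set (Fin N → ℝ) := {x | quadForm (A₁ - A₂) x ≠ κ} with hsdef
  have hs_ne : ∀ x ∈ s, a x ≠ b x := by
    intro x hx hab
    apply hx
    have hsub : a x - b x = -(1/2) * quadForm (A₁ - A₂) x + (Real.log c₂ - Real.log c₁) := by
      rw [quadForm_sub, hadef, hbdef]; ring
    rw [hab, sub_self] at hsub
    rw [hκdef]; linarith
  have hμs : volume s ≠ 0 := by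
    intro h0
    have hopen : IsOpen s :=
      (isOpen_compl_singleton).preimage (continuous_quadForm (A₁ - A₂))
    have hempty : s = ∅ := (hopen.measure_eq_zero_iff volume).mp h0
    have hall : ∀ x, quadForm (A₁ - A₂) x = κ := by
      intro x
      by_contra hx
      exact absurd (hempty ▸ hx : x ∈ (∅ : Set (Fin N → ℝ))) (Set.notMem_empty x)
    have hD := eq_zero_of_quadForm_const (A₁ - A₂) (h₁.sub h₂) κ hall
    exact hne (sub_eq_zero.mp hD)
  have key : ∫⁻ x, ENNReal.ofReal (Real.exp (θ * a x + (1 - θ) * b x))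
      < ∫⁻ x, ENNReal.ofReal (θ * Real.exp (a x) + (1 - θ) * Real.exp (b x)) := by
    refine lintegral_strict_mono_of_ae_le_of_ae_lt_on ?_ ?_ ?_ hμs ?_
    · exact (ENNReal.measurable_ofReal.comp
        (((Real.measurable_exp.comp ((((continuous_quadForm A₁).measurable.const_mul _).sub
          hU).sub measurable_const)).const_mul θ).add
          ((Real.measurable_exp.comp ((((continuous_quadForm A₂).measurable.const_mul _).sub
          hU).sub measurable_const)).const_mul (1 - θ)))).aemeasurable
    · rw [hIθ]
      exact ENNReal.mul_ne_top hZθ ENNReal.ofReal_ne_top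
    · apply ae_of_all
      intro x
      apply ENNReal.ofReal_le_ofReal
      have := convexOn_exp.2 (Set.mem_univ (a x)) (Set.mem_univ (b x)) hθ0.le
        (le_of_lt (by linarith : (0:ℝ) < 1 - θ)) (by ring : θ + (1 - θ) = 1)
      simpa [smul_eq_mul] using this
    · apply ae_of_all
      intro x hx
      have hab := hs_ne x hx
      have hlt := strictConvexOn_exp.2 (Set.mem_univ (a x)) (Set.mem_univ (b x)) hab hθ0
        (by linarith : (0:ℝ) < 1 - θ) (by ring : θ + (1 - θ) = 1)
      have hpos : 0 < θ * Real.exp (a x) + (1 - θ) * Real.exp (b x) :=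
        add_pos (mul_pos hθ0 (Real.exp_pos _))
          (mul_pos (by linarith : (0:ℝ) < 1 - θ) (Real.exp_pos _))
      exact (ENNReal.ofReal_lt_ofReal_iff hpos).mpr (by simpa [smul_eq_mul] using hlt)
  have hRHS : ∫⁻ x, ENNReal.ofReal (θ * Real.exp (a x) + (1 - θ) * Real.exp (b x)) = 1 := by
    have heq : ∀ x, ENNReal.ofReal (θ * Real.exp (a x) + (1 - θ) * Real.exp (b x))
        = ENNReal.ofReal θ * ENNReal.ofReal (Real.exp (a x))
          + ENNReal.ofReal (1 - θ) * ENNReal.ofReal (Real.exp (b x)) := by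
      intro x
      rw [ENNReal.ofReal_add (mul_nonneg hθ0.le (Real.exp_pos _).le)
        (mul_nonneg (by linarith : (0:ℝ) ≤ 1 - θ) (Real.exp_pos _).le), ENNReal.ofReal_mul hθ0.le,
        ENNReal.ofReal_mul (by linarith)]
    simp_rw [heq]
    rw [lintegral_add_left (hma.const_mul _), lintegral_const_mul _ hma,
      lintegral_const_mul _ hmb, hIa, hIb, mul_one, mul_one,
      ← ENNReal.ofReal_add hθ0.le (by linarith)]
    norm_num
  rw [hIθ, hRHS] at key
  have hZlt : gibbsZ N Aθ U < ENNReal.ofReal Cθ := by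
    have h1 : ENNReal.ofReal Cθ⁻¹ * ENNReal.ofReal Cθ = 1 := by
      rw [← ENNReal.ofReal_mul (inv_pos.mpr hCθ).le, inv_mul_cancel₀ hCθ.ne', ENNReal.ofReal_one]
    calc gibbsZ N Aθ U = gibbsZ N Aθ U * ENNReal.ofReal Cθ⁻¹ * ENNReal.ofReal Cθ := by
          rw [mul_assoc, h1, mul_one]
      _ < 1 * ENNReal.ofReal Cθ := by
          exact (ENNReal.mul_lt_mul_iff_left (ENNReal.ofReal_pos.mpr hCθ).ne' ENNReal.ofReal_ne_top).mpr key
      _ = ENNReal.ofReal Cθ := one_mul _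
  have hltR : cθ < Cθ := ENNReal.toReal_lt_of_lt_ofReal hZlt
  have hlog : Real.log cθ < θ * Real.log c₁ + (1 - θ) * Real.log c₂ := by
    have := Real.log_lt_log hcθ hltR
    rwa [hlogCθ] at this
  rw [freeEnergy, freeEnergy, freeEnergy, if_neg hZ₁, if_neg hZ₂, if_neg hZθ]
  rw [← EReal.coe_mul, ← EReal.coe_mul, ← EReal.coe_add, EReal.coe_lt_coe_iff]
  rw [← hc₁def, ← hc₂def, ← hcθdef]
  nlinarith [hlog]
end

section
/- Let G ∈ S^N_{++} and let U : ℝ^N → ℝ satisfy the weak growth condition. For any invertible matrix T ∈ ℝ^{N×N}, the Luttinger–Ward functional Φ[G,U] := 2F[G,U] - Tr[log G] - N log(2πe) satisfies the transformation rule Φ[TGT*, U] = Φ[G, U∘T], where F[G,U] = sup_{μ: ∫xxᵀdμ = G} [H(μ) - ∫ U dμ]. -/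
open MeasureTheory Filter Matrix
open scoped ENNReal Classical

namespace LWaux

open MeasureTheory Matrix

/-! ### EReal lemmas -/

lemma ereal_coe_ennreal_eq (n : ℝ≥0∞) (hn : n ≠ ⊤) :
    ((n : EReal)) = ((n.toReal : ℝ) : EReal) := by
  conv_lhs => rw [← ENNReal.ofReal_toReal hn]
  rw [EReal.coe_ennreal_ofReal, max_eq_left ENNReal.toReal_nonneg]

lemma ereal_add_coe_comm (x y : EReal) (a : ℝ) : (x + (a : EReal)) + y = (x + y) + a := by
  induction x using EReal.rec <;> induction y using EReal.rec <;>
    simp_all [EReal.bot_add, EReal.add_bot, EReal.top_add_coe, EReal.coe_add_top,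
      ← EReal.coe_add] <;> ring_nf

lemma ereal_add_coe_sub (x y : EReal) (a : ℝ) : (x + (a : EReal)) - y = (x - y) + a := by
  rw [sub_eq_add_neg, sub_eq_add_neg, ereal_add_coe_comm]

lemma ereal_sub_coe_add (x : EReal) (a b : ℝ) :
    (x + (a : EReal)) - ((b + a : ℝ) : EReal) = x - (b : EReal) := by
  induction x using EReal.rec with
  | bot => simp [EReal.bot_add, EReal.bot_sub]
  | coe r => rw [← EReal.coe_add, ← EReal.coe_sub, ← EReal.coe_sub]; exact congrArg _ (by ring)
  | top => rw [EReal.top_add_coe, EReal.top_sub_coe, EReal.top_sub_coe]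

lemma ereal_two_mul_add_coe (x : EReal) (c : ℝ) :
    (2 : EReal) * (x + (c : EReal)) = 2 * x + ((2 * c : ℝ) : EReal) := by
  have h2 : (2 : EReal) = ((2 : ℝ) : EReal) := by norm_cast
  induction x using EReal.rec with
  | bot =>
      rw [EReal.bot_add, h2, EReal.coe_mul_bot_of_pos (by norm_num), EReal.bot_add]
  | coe r =>
      rw [h2, ← EReal.coe_add, ← EReal.coe_mul, ← EReal.coe_mul, ← EReal.coe_add]
      ring_nf
  | top =>
      rw [EReal.top_add_coe, h2, EReal.coe_mul_top_of_pos (by norm_num), EReal.top_add_coe]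

/-- adding a real constant as an order isomorphism of `EReal`. -/
noncomputable def addRightIso (c : ℝ) : EReal ≃o EReal where
  toFun x := x + (c : EReal)
  invFun x := x - (c : EReal)
  left_inv x := EReal.add_sub_cancel_right
  right_inv x := EReal.sub_add_cancel
  map_rel_iff' := by
    intro x y
    constructor
    · intro h
      have := EReal.sub_le_sub h (le_refl (c : EReal))
      simpa [EReal.add_sub_cancel_right] using this
    · intro h
      exact add_le_add h (le_refl _)

lemma ereal_sSup_add_coe (S : Set EReal) (c : ℝ) :
    sSup ((fun x => x + (c : EReal)) '' S) = sSup S + c := by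
  rw [sSup_image]
  exact ((addRightIso c).map_sSup S).symm

end LWaux
namespace LWaux2
open MeasureTheory Matrix LWaux

variable {N : ℕ}

lemma measurable_mulVec (T : Matrix (Fin N) (Fin N) ℝ) :
    Measurable fun x : Fin N → ℝ => T.mulVec x := by
  apply measurable_pi_lambda
  intro i
  show Measurable fun x : Fin N → ℝ => ∑ j, T i j * x j
  exact Finset.measurable_sum _ fun j _ => (measurable_pi_apply j).const_mul _

/-- the measurable equivalence given by an invertible matrix -/
noncomputable def mvEquiv (T : Matrix (Fin N) (Fin N) ℝ) (hT : IsUnit T.det) :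
    (Fin N → ℝ) ≃ᵐ (Fin N → ℝ) where
  toEquiv :=
    { toFun := T.mulVec
      invFun := T⁻¹.mulVec
      left_inv := fun x => by
        rw [Matrix.mulVec_mulVec, Matrix.nonsing_inv_mul _ hT, Matrix.one_mulVec]
      right_inv := fun x => by
        rw [Matrix.mulVec_mulVec, Matrix.mul_nonsing_inv _ hT, Matrix.one_mulVec] }
  measurable_toFun := measurable_mulVec T
  measurable_invFun := measurable_mulVec T⁻¹

@[simp] lemma mvEquiv_coe (T : Matrix (Fin N) (Fin N) ℝ) (hT : IsUnit T.det) :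
    ⇑(mvEquiv T hT) = T.mulVec := rfl

@[simp] lemma mvEquiv_symm_coe (T : Matrix (Fin N) (Fin N) ℝ) (hT : IsUnit T.det) :
    ⇑(mvEquiv T hT).symm = T⁻¹.mulVec := rfl

lemma map_volume (T : Matrix (Fin N) (Fin N) ℝ) (hT : IsUnit T.det) :
    Measure.map T.mulVec (volume : Measure (Fin N → ℝ))
      = ENNReal.ofReal |T.det⁻¹| • volume := by
  have h := Real.map_matrix_volume_pi_eq_smul_volume_pi
    (M := T) (isUnit_iff_ne_zero.mp hT)
  have hcoe : ⇑(Matrix.toLin' T) = T.mulVec := by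
    funext v; exact Matrix.toLin'_apply T v
  rwa [hcoe] at h

lemma map_mulVec_mulVec (T : Matrix (Fin N) (Fin N) ℝ) (hT : IsUnit T.det)
    (μ : Measure (Fin N → ℝ)) :
    (μ.map T⁻¹.mulVec).map T.mulVec = μ := by
  rw [Measure.map_map (measurable_mulVec T) (measurable_mulVec T⁻¹)]
  have : T.mulVec ∘ T⁻¹.mulVec = id := by
    funext x
    simp [Function.comp, Matrix.mulVec_mulVec, Matrix.mul_nonsing_inv _ hT,
      Matrix.one_mulVec]
  rw [this, Measure.map_id]

lemma ac_map (T : Matrix (Fin N) (Fin N) ℝ) (hT : IsUnit T.det)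
    {μ : Measure (Fin N → ℝ)} (h : μ ≪ volume) :
    μ.map T.mulVec ≪ volume := by
  refine (h.map (measurable_mulVec T)).trans ?_
  rw [map_volume T hT]
  exact Measure.smul_absolutelyContinuous

lemma ac_map_iff (T : Matrix (Fin N) (Fin N) ℝ) (hT : IsUnit T.det)
    {μ : Measure (Fin N → ℝ)} :
    μ.map T.mulVec ≪ volume ↔ μ ≪ volume := by
  constructor
  · intro h
    have hT' : IsUnit T⁻¹.det := by
      rw [Matrix.det_nonsing_inv, Ring.inverse_eq_inv]
      exact (isUnit_iff_ne_zero.mpr (inv_ne_zero (isUnit_iff_ne_zero.mp hT)))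
    have := ac_map T⁻¹ hT' h
    rwa [Measure.map_map (measurable_mulVec T⁻¹) (measurable_mulVec T),
      show T⁻¹.mulVec ∘ T.mulVec = id by
        funext x
        simp [Function.comp, Matrix.mulVec_mulVec, Matrix.nonsing_inv_mul _ hT,
          Matrix.one_mulVec],
      Measure.map_id] at this
  · exact ac_map T hT

/-- key shift lemma for truncated EReal integrals -/
lemma lintegral_ofReal_shift {α : Type*} [MeasurableSpace α] (μ : Measure α)
    [IsProbabilityMeasure μ] {h : α → ℝ} (hm : AEStronglyMeasurable h μ) (c : ℝ) :
    ((∫⁻ x, ENNReal.ofReal (h x + c) ∂μ : ℝ≥0∞) : EReal)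
        - ((∫⁻ x, ENNReal.ofReal (-(h x + c)) ∂μ : ℝ≥0∞) : EReal)
      = (((∫⁻ x, ENNReal.ofReal (h x) ∂μ : ℝ≥0∞) : EReal)
        - ((∫⁻ x, ENNReal.ofReal (-(h x)) ∂μ : ℝ≥0∞) : EReal)) + (c : EReal) := by
  set P' := ∫⁻ x, ENNReal.ofReal (h x + c) ∂μ with hP'd
  set Nn' := ∫⁻ x, ENNReal.ofReal (-(h x + c)) ∂μ with hN'd
  set P := ∫⁻ x, ENNReal.ofReal (h x) ∂μ with hPd
  set Nn := ∫⁻ x, ENNReal.ofReal (-(h x)) ∂μ with hNd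
  -- comparison bounds
  have bound : ∀ (f : α → ℝ) (d : ℝ),
      (∫⁻ x, ENNReal.ofReal (f x + d) ∂μ) ≤ (∫⁻ x, ENNReal.ofReal (f x) ∂μ) + ENNReal.ofReal d := by
    intro f d
    calc (∫⁻ x, ENNReal.ofReal (f x + d) ∂μ)
        ≤ ∫⁻ x, ENNReal.ofReal (f x) + ENNReal.ofReal d ∂μ :=
          lintegral_mono fun x => ENNReal.ofReal_add_le
      _ = (∫⁻ x, ENNReal.ofReal (f x) ∂μ) + ENNReal.ofReal d := by
          rw [lintegral_add_right _ measurable_const, lintegral_const, measure_univ, mul_one]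
  have hPP' : P' = ⊤ ↔ P = ⊤ := by
    constructor
    · intro hp
      by_contra hne
      have h1 : P' ≤ P + ENNReal.ofReal c := bound h c
      rw [hp] at h1
      exact (ENNReal.add_ne_top.mpr ⟨hne, ENNReal.ofReal_ne_top⟩) (top_le_iff.mp h1)
    · intro hp
      by_contra hne
      have h1 : P ≤ P' + ENNReal.ofReal (-c) := by
        calc P = ∫⁻ x, ENNReal.ofReal ((h x + c) + -c) ∂μ :=
              lintegral_congr fun x => congrArg ENNReal.ofReal (by ring)
          _ ≤ P' + ENNReal.ofReal (-c) := bound _ _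
      rw [hp] at h1
      exact (ENNReal.add_ne_top.mpr ⟨hne, ENNReal.ofReal_ne_top⟩) (top_le_iff.mp h1)
  have hNN' : Nn' = ⊤ ↔ Nn = ⊤ := by
    constructor
    · intro hp
      by_contra hne
      have h1 : Nn' ≤ Nn + ENNReal.ofReal (-c) := by
        calc Nn' = ∫⁻ x, ENNReal.ofReal (-h x + -c) ∂μ :=
              lintegral_congr fun x => congrArg ENNReal.ofReal (by ring)
          _ ≤ Nn + ENNReal.ofReal (-c) := bound _ _
      rw [hp] at h1
      exact (ENNReal.add_ne_top.mpr ⟨hne, ENNReal.ofReal_ne_top⟩) (top_le_iff.mp h1)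
    · intro hp
      by_contra hne
      have h1 : Nn ≤ Nn' + ENNReal.ofReal c := by
        calc Nn = ∫⁻ x, ENNReal.ofReal (-(h x + c) + c) ∂μ :=
              lintegral_congr fun x => congrArg ENNReal.ofReal (by ring)
          _ ≤ Nn' + ENNReal.ofReal c := bound _ _
      rw [hp] at h1
      exact (ENNReal.add_ne_top.mpr ⟨hne, ENNReal.ofReal_ne_top⟩) (top_le_iff.mp h1)
  by_cases hP : P = ⊤
  · have hP' : P' = ⊤ := hPP'.mpr hP
    by_cases hN : Nn = ⊤
    · have hN' : Nn' = ⊤ := hNN'.mpr hN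
      rw [hP, hP', hN, hN']
      simp [EReal.coe_ennreal_top, EReal.sub_top, EReal.bot_add]
    · have hN' : Nn' ≠ ⊤ := fun hh => hN (hNN'.mp hh)
      rw [hP, hP', ereal_coe_ennreal_eq Nn hN, ereal_coe_ennreal_eq Nn' hN',
        EReal.coe_ennreal_top, EReal.top_sub_coe, EReal.top_sub_coe, EReal.top_add_coe]
  · have hP'ne : P' ≠ ⊤ := fun hh => hP (hPP'.mp hh)
    by_cases hN : Nn = ⊤
    · have hN' : Nn' = ⊤ := hNN'.mpr hN
      rw [hN, hN', EReal.coe_ennreal_top, EReal.sub_top, EReal.sub_top, EReal.bot_add]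
    · have hN'ne : Nn' ≠ ⊤ := fun hh => hN (hNN'.mp hh)
      -- all finite: reduce to real computation via integrals
      have habs : ∀ x : α, (‖h x‖₊ : ℝ≥0∞) = ENNReal.ofReal (h x) + ENNReal.ofReal (-(h x)) := by
        intro x
        rcases le_total 0 (h x) with hx | hx
        · rw [show ENNReal.ofReal (-(h x)) = 0 from ENNReal.ofReal_eq_zero.mpr (by linarith),
            add_zero, ← enorm_eq_nnnorm, ← ofReal_norm, Real.norm_eq_abs, abs_of_nonneg hx]
        · rw [show ENNReal.ofReal (h x) = 0 from ENNReal.ofReal_eq_zero.mpr hx,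
            zero_add, ← enorm_eq_nnnorm, ← ofReal_norm, Real.norm_eq_abs, abs_of_nonpos hx]
      have hmae : AEMeasurable (fun x => ENNReal.ofReal (h x)) μ :=
        (ENNReal.measurable_ofReal.comp_aemeasurable hm.aemeasurable)
      have hInt : Integrable h μ := by
        refine ⟨hm, ?_⟩
        have hlt : (∫⁻ x, (‖h x‖₊ : ℝ≥0∞) ∂μ) < ⊤ := by
          have heq : (∫⁻ x, (‖h x‖₊ : ℝ≥0∞) ∂μ)
              = ∫⁻ x, ENNReal.ofReal (h x) + ENNReal.ofReal (-(h x)) ∂μ :=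
            lintegral_congr habs
          rw [heq, lintegral_add_left' hmae]
          exact ENNReal.add_lt_top.mpr ⟨lt_top_iff_ne_top.mpr hP, lt_top_iff_ne_top.mpr hN⟩
        exact hlt
      have hIc : Integrable (fun x => h x + c) μ := hInt.add (integrable_const c)
      have e1 := integral_eq_lintegral_pos_part_sub_lintegral_neg_part hInt
      have e2 := integral_eq_lintegral_pos_part_sub_lintegral_neg_part hIc
      have e3 : ∫ x, (h x + c) ∂μ = (∫ x, h x ∂μ) + c := by
        rw [integral_add hInt (integrable_const c), integral_const, probReal_univ]
        simp
      rw [ereal_coe_ennreal_eq P' hP'ne, ereal_coe_ennreal_eq Nn' hN'ne,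
        ereal_coe_ennreal_eq P hP, ereal_coe_ennreal_eq Nn hN,
        ← EReal.coe_sub, ← EReal.coe_sub, ← EReal.coe_add]
      congr 1
      rw [hP'd, hN'd, hPd, hNd]
      rw [← e1]
      calc (∫⁻ x, ENNReal.ofReal (h x + c) ∂μ).toReal
            - (∫⁻ x, ENNReal.ofReal (-(h x + c)) ∂μ).toReal
          = ∫ x, (h x + c) ∂μ := e2.symm
        _ = (∫ x, h x ∂μ) + c := e3

end LWaux2
namespace LWaux3
open MeasureTheory Matrix LWaux LWaux2

variable {N : ℕ}

lemma erealIntegral_map (T : Matrix (Fin N) (Fin N) ℝ) (hT : IsUnit T.det)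
    (U : (Fin N → ℝ) → ℝ) (μ : Measure (Fin N → ℝ)) :
    erealIntegral U (μ.map T.mulVec) = erealIntegral (fun x => U (T.mulVec x)) μ := by
  have h1 : Measure.map T.mulVec μ = Measure.map (⇑(mvEquiv T hT)) μ := rfl
  rw [erealIntegral, erealIntegral, h1, lintegral_map_equiv, lintegral_map_equiv]
  rfl

lemma integrable_comp_mulVec (T : Matrix (Fin N) (Fin N) ℝ) {μ : Measure (Fin N → ℝ)}
    (h : Integrable (fun x : Fin N → ℝ => ‖x‖ ^ 2) μ) :
    Integrable (fun x : Fin N → ℝ => ‖T.mulVec x‖ ^ 2) μ := by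
  set φ : (Fin N → ℝ) →L[ℝ] (Fin N → ℝ) :=
    LinearMap.toContinuousLinearMap (Matrix.toLin' T) with hφ
  have hφx : ∀ x, φ x = T.mulVec x := fun x => Matrix.toLin'_apply T x
  refine Integrable.mono' (h.const_mul (‖φ‖ ^ 2)) ?_ (ae_of_all _ fun x => ?_)
  · have : Continuous fun x : Fin N → ℝ => ‖φ x‖ ^ 2 := (φ.continuous.norm).pow 2
    refine (this.aestronglyMeasurable).congr (ae_of_all _ fun x => ?_)
    simp only [hφx]
  · rw [Real.norm_eq_abs, abs_of_nonneg (by positivity), ← hφx]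
    calc ‖φ x‖ ^ 2 ≤ (‖φ‖ * ‖x‖) ^ 2 := by
          apply pow_le_pow_left₀ (norm_nonneg _) (φ.le_opNorm x)
      _ = ‖φ‖ ^ 2 * ‖x‖ ^ 2 := by ring

lemma integrable_norm_sq_map (T : Matrix (Fin N) (Fin N) ℝ) (hT : IsUnit T.det)
    {μ : Measure (Fin N → ℝ)} (h : Integrable (fun x : Fin N → ℝ => ‖x‖ ^ 2) μ) :
    Integrable (fun x : Fin N → ℝ => ‖x‖ ^ 2) (μ.map T.mulVec) := by
  rw [show Measure.map T.mulVec μ = Measure.map (⇑(mvEquiv T hT)) μ from rfl,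
    integrable_map_equiv]
  exact integrable_comp_mulVec T h

lemma secondMoment_map (T : Matrix (Fin N) (Fin N) ℝ) (hT : IsUnit T.det)
    {μ : Measure (Fin N → ℝ)} (h : Integrable (fun x : Fin N → ℝ => ‖x‖ ^ 2) μ) :
    secondMoment (μ.map T.mulVec) = T * secondMoment μ * Tᵀ := by
  have hint : ∀ k l : Fin N, Integrable (fun x : Fin N → ℝ => x k * x l) μ := by
    intro k l
    refine Integrable.mono' h
      (((measurable_pi_apply k).mul (measurable_pi_apply l)).aestronglyMeasurable)
      (ae_of_all _ fun x => ?_)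
    calc ‖x k * x l‖ = ‖x k‖ * ‖x l‖ := norm_mul _ _
      _ ≤ ‖x‖ * ‖x‖ :=
        mul_le_mul (norm_le_pi_norm x k) (norm_le_pi_norm x l) (norm_nonneg _) (norm_nonneg _)
      _ = ‖x‖ ^ 2 := (sq ‖x‖).symm
  ext i j
  show (∫ y, y i * y j ∂(μ.map T.mulVec)) = (T * secondMoment μ * Tᵀ) i j
  rw [show Measure.map T.mulVec μ = Measure.map (⇑(mvEquiv T hT)) μ from rfl,
    integral_map_equiv]
  calc ∫ x, (mvEquiv T hT) x i * (mvEquiv T hT) x j ∂μ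
      = ∫ x, ∑ k, ∑ l, (T i k * T j l) * (x k * x l) ∂μ := by
        congr 1; funext x
        show (∑ k, T i k * x k) * (∑ l, T j l * x l) = _
        rw [Finset.sum_mul_sum]
        exact Finset.sum_congr rfl fun k _ => Finset.sum_congr rfl fun l _ => by ring
    _ = ∑ k, ∫ x, ∑ l, (T i k * T j l) * (x k * x l) ∂μ := by
        rw [integral_finset_sum]
        exact fun k _ => integrable_finset_sum _ fun l _ => (hint k l).const_mul _
    _ = ∑ k, ∑ l, ∫ x, (T i k * T j l) * (x k * x l) ∂μ := by
        refine Finset.sum_congr rfl fun k _ => ?_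
        rw [integral_finset_sum]
        exact fun l _ => (hint k l).const_mul _
    _ = ∑ k, ∑ l, (T i k * T j l) * ∫ x, x k * x l ∂μ := by
        refine Finset.sum_congr rfl fun k _ => Finset.sum_congr rfl fun l _ => ?_
        simpa [smul_eq_mul] using
          (integral_smul (T i k * T j l) (fun x : Fin N → ℝ => x k * x l) (μ := μ))
    _ = (T * secondMoment μ * Tᵀ) i j := by
        rw [Finset.sum_comm]
        simp only [Matrix.mul_apply, Matrix.transpose_apply, secondMoment, Matrix.of_apply,
          Finset.sum_mul]
        exact Finset.sum_congr rfl fun l _ => Finset.sum_congr rfl fun k _ => by ring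

lemma diffEntropy_map (T : Matrix (Fin N) (Fin N) ℝ) (hT : IsUnit T.det)
    (μ : Measure (Fin N → ℝ)) [IsProbabilityMeasure μ] (hac : μ ≪ volume) :
    diffEntropy (μ.map T.mulVec) = diffEntropy μ + ((Real.log |T.det| : ℝ) : EReal) := by
  have hd : T.det ≠ 0 := isUnit_iff_ne_zero.mp hT
  have hdabs : (0:ℝ) < |T.det| := abs_pos.mpr hd
  set ρ : (Fin N → ℝ) → ℝ≥0∞ := μ.rnDeriv volume with hρ
  have hρm : Measurable ρ := Measure.measurable_rnDeriv μ volume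
  set c' : ℝ≥0∞ := ENNReal.ofReal |T.det⁻¹| with hc'
  have hgm : Measurable fun y : Fin N → ℝ => c' * ρ (T⁻¹.mulVec y) :=
    (hρm.comp (measurable_mulVec T⁻¹)).const_mul c'
  have hkey : μ.map T.mulVec = volume.withDensity (fun y => c' * ρ (T⁻¹.mulVec y)) := by
    have hμ : (volume : Measure (Fin N → ℝ)).withDensity ρ = μ :=
      Measure.withDensity_rnDeriv_eq μ volume hac
    ext s hs
    rw [Measure.map_apply (measurable_mulVec T) hs, ← hμ,
      withDensity_apply _ ((measurable_mulVec T) hs), withDensity_apply _ hs]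
    have h2 : ∫⁻ y in s, ρ (T⁻¹.mulVec y) ∂(Measure.map T.mulVec volume)
        = ∫⁻ x in T.mulVec ⁻¹' s, ρ (T⁻¹.mulVec (T.mulVec x)) ∂volume :=
      setLIntegral_map hs (hρm.comp (measurable_mulVec T⁻¹)) (measurable_mulVec T)
    have hinv : ∀ x : Fin N → ℝ, T⁻¹.mulVec (T.mulVec x) = x := fun x => by
      rw [Matrix.mulVec_mulVec, Matrix.nonsing_inv_mul _ hT, Matrix.one_mulVec]
    calc ∫⁻ x in T.mulVec ⁻¹' s, ρ x ∂volume
        = ∫⁻ x in T.mulVec ⁻¹' s, ρ (T⁻¹.mulVec (T.mulVec x)) ∂volume := by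
          apply lintegral_congr fun x => by rw [hinv]
      _ = ∫⁻ y in s, ρ (T⁻¹.mulVec y) ∂(Measure.map T.mulVec volume) := h2.symm
      _ = ∫⁻ y in s, ρ (T⁻¹.mulVec y) ∂(c' • (volume : Measure (Fin N → ℝ))) := by
          rw [map_volume T hT]
      _ = c' * ∫⁻ y in s, ρ (T⁻¹.mulVec y) ∂volume := by
          rw [Measure.restrict_smul, lintegral_smul_measure, smul_eq_mul]
      _ = ∫⁻ y in s, c' * ρ (T⁻¹.mulVec y) ∂volume := by
          rw [lintegral_const_mul c'
            (show Measurable fun y : Fin N → ℝ => ρ (T⁻¹.mulVec y) from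
              hρm.comp (measurable_mulVec T⁻¹))]
  have hacm : μ.map T.mulVec ≪ volume := ac_map T hT hac
  have hrn : (μ.map T.mulVec).rnDeriv volume =ᵐ[volume] fun y => c' * ρ (T⁻¹.mulVec y) := by
    rw [hkey]
    exact Measure.rnDeriv_withDensity volume hgm
  have hrnμ : (μ.map T.mulVec).rnDeriv volume
      =ᵐ[μ.map T.mulVec] fun y => c' * ρ (T⁻¹.mulVec y) := hacm.ae_le hrn
  have hrnx : ∀ᵐ x ∂μ, (μ.map T.mulVec).rnDeriv volume (T.mulVec x) = c' * ρ x := by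
    have h3 := ((mvEquiv T hT).measurableEmbedding.ae_map_iff
      (μ := μ) (p := fun y => (μ.map T.mulVec).rnDeriv volume y = c' * ρ (T⁻¹.mulVec y))).mp hrnμ
    filter_upwards [h3] with x hx
    rw [show (mvEquiv T hT) x = T.mulVec x from rfl] at hx
    rwa [Matrix.mulVec_mulVec, Matrix.nonsing_inv_mul _ hT, Matrix.one_mulVec] at hx
  have hμpos : ∀ᵐ x ∂μ, 0 < ρ x := Measure.rnDeriv_pos hac
  have hμfin : ∀ᵐ x ∂μ, ρ x < ⊤ := hac.ae_le (Measure.rnDeriv_lt_top μ volume)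
  have hc's : c'.toReal = |T.det|⁻¹ := by
    rw [hc', ENNReal.toReal_ofReal (abs_nonneg _), abs_inv]
  have hptwise : ∀ᵐ x ∂μ, ((μ.map T.mulVec).rnDeriv volume (T.mulVec x)).toReal
      = |T.det|⁻¹ * (ρ x).toReal := by
    filter_upwards [hrnx] with x h1
    rw [h1, ENNReal.toReal_mul, hc's]
  have hlog : ∀ᵐ x ∂μ, Real.log (((μ.map T.mulVec).rnDeriv volume (T.mulVec x)).toReal)
      = Real.log ((ρ x).toReal) - Real.log |T.det| := by
    filter_upwards [hptwise, hμpos, hμfin] with x h1 h2 h3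
    have ht : (ρ x).toReal ≠ 0 :=
      ne_of_gt (ENNReal.toReal_pos (ne_of_gt h2) (lt_top_iff_ne_top.mp h3))
    rw [h1, Real.log_mul (inv_ne_zero (ne_of_gt hdabs)) ht, Real.log_inv]
    ring
  set hh : (Fin N → ℝ) → ℝ := fun x => -(Real.log ((ρ x).toReal)) with hhd
  have hhm : AEStronglyMeasurable hh μ :=
    ((Real.measurable_log.comp hρm.ennreal_toReal).neg).aestronglyMeasurable
  rw [diffEntropy, if_pos hacm, diffEntropy, if_pos hac]
  have hA : (∫⁻ y, ENNReal.ofReal (-(Real.log (((μ.map T.mulVec).rnDeriv volume y).toReal)))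
        ∂(μ.map T.mulVec))
      = ∫⁻ x, ENNReal.ofReal (hh x + Real.log |T.det|) ∂μ := by
    refine Eq.trans (lintegral_map_equiv _ (mvEquiv T hT)) ?_
    apply lintegral_congr_ae
    filter_upwards [hlog] with x h1
    rw [show (mvEquiv T hT) x = T.mulVec x from rfl, h1, hhd]
    congr 1
    ring
  have hB : (∫⁻ y, ENNReal.ofReal (Real.log (((μ.map T.mulVec).rnDeriv volume y).toReal))
        ∂(μ.map T.mulVec))
      = ∫⁻ x, ENNReal.ofReal (-(hh x + Real.log |T.det|)) ∂μ := by
    refine Eq.trans (lintegral_map_equiv _ (mvEquiv T hT)) ?_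
    apply lintegral_congr_ae
    filter_upwards [hlog] with x h1
    rw [show (mvEquiv T hT) x = T.mulVec x from rfl, h1, hhd]
    congr 1
    ring
  rw [hA, hB, lintegral_ofReal_shift μ hhm (Real.log |T.det|)]
  simp only [hhd, neg_neg, hρ]

end LWaux3
namespace LWaux4
open MeasureTheory Matrix LWaux LWaux2 LWaux3

variable {N : ℕ}

lemma value_map (T : Matrix (Fin N) (Fin N) ℝ) (hT : IsUnit T.det)
    (U : (Fin N → ℝ) → ℝ) (μ : Measure (Fin N → ℝ)) [IsProbabilityMeasure μ] :
    diffEntropy (μ.map T.mulVec) - erealIntegral U (μ.map T.mulVec)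
      = (diffEntropy μ - erealIntegral (fun x => U (T.mulVec x)) μ)
        + ((Real.log |T.det| : ℝ) : EReal) := by
  rw [erealIntegral_map T hT]
  by_cases hac : μ ≪ volume
  · rw [diffEntropy_map T hT μ hac, ereal_add_coe_sub]
  · have hac' : ¬ μ.map T.mulVec ≪ volume := fun hcon => hac ((ac_map_iff T hT).mp hcon)
    rw [diffEntropy, if_neg hac', diffEntropy, if_neg hac, EReal.bot_sub,
      EReal.bot_add]

lemma inv_isUnit_det (T : Matrix (Fin N) (Fin N) ℝ) (hT : IsUnit T.det) :
    IsUnit T⁻¹.det := by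
  rw [Matrix.det_nonsing_inv, Ring.inverse_eq_inv]
  exact isUnit_iff_ne_zero.mpr (inv_ne_zero (isUnit_iff_ne_zero.mp hT))

lemma inv_conj (T : Matrix (Fin N) (Fin N) ℝ) (hT : IsUnit T.det)
    (G : Matrix (Fin N) (Fin N) ℝ) :
    T⁻¹ * (T * G * Tᵀ) * T⁻¹ᵀ = G := by
  have hTt : IsUnit Tᵀ.det := by rwa [Matrix.det_transpose]
  calc T⁻¹ * (T * G * Tᵀ) * T⁻¹ᵀ = T⁻¹ * (T * G * Tᵀ) * Tᵀ⁻¹ := by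
        rw [Matrix.transpose_nonsing_inv]
    _ = (T⁻¹ * T) * (G * (Tᵀ * Tᵀ⁻¹)) := by simp only [Matrix.mul_assoc]
    _ = G := by
        rw [Matrix.nonsing_inv_mul _ hT, Matrix.mul_nonsing_inv _ hTt, Matrix.mul_one,
          Matrix.one_mul]

lemma lwF_map (T : Matrix (Fin N) (Fin N) ℝ) (hT : IsUnit T.det)
    (U : (Fin N → ℝ) → ℝ) (G : Matrix (Fin N) (Fin N) ℝ) :
    lwF N U (T * G * Tᵀ)
      = lwF N (fun x => U (T.mulVec x)) G + ((Real.log |T.det| : ℝ) : EReal) := by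
  rw [lwF, lwF, ← ereal_sSup_add_coe, ← Set.image_comp]
  congr 1
  ext v
  simp only [Set.mem_image, Set.mem_setOf_eq, Function.comp]
  constructor
  · rintro ⟨μ', ⟨hp, hi, hm⟩, rfl⟩
    have hT' : IsUnit T⁻¹.det := inv_isUnit_det T hT
    haveI : IsProbabilityMeasure μ' := hp
    haveI hpν : IsProbabilityMeasure (μ'.map T⁻¹.mulVec) :=
      Measure.isProbabilityMeasure_map (measurable_mulVec T⁻¹).aemeasurable
    refine ⟨μ'.map T⁻¹.mulVec, ⟨hpν, integrable_norm_sq_map T⁻¹ hT' hi, ?_⟩, ?_⟩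
    · rw [secondMoment_map T⁻¹ hT' hi, hm]
      exact inv_conj T hT G
    · have hv := value_map T hT U (μ'.map T⁻¹.mulVec)
      rw [map_mulVec_mulVec T hT μ'] at hv
      exact hv.symm
  · rintro ⟨μ, ⟨hp, hi, hm⟩, rfl⟩
    haveI : IsProbabilityMeasure μ := hp
    refine ⟨μ.map T.mulVec,
      ⟨Measure.isProbabilityMeasure_map (measurable_mulVec T).aemeasurable,
        integrable_norm_sq_map T hT hi, by rw [secondMoment_map T hT hi, hm]⟩, ?_⟩
    exact value_map T hT U μ

end LWaux4
/-- the transformation rule for the Luttinger–Ward functional: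
`Φ[TGT*, U] = Φ[G, U∘T]` for invertible `T`. -/
theorem lwPhi_transformation (N : ℕ) (U : (Fin N → ℝ) → ℝ) (hU : WeakGrowth N U)
    (G : Matrix (Fin N) (Fin N) ℝ) (hG : G.PosDef)
    (T : Matrix (Fin N) (Fin N) ℝ) (hT : IsUnit T.det) :
    lwPhi N U (T * G * Tᵀ) = lwPhi N (fun x => U (T.mulVec x)) G := by
  have hd : T.det ≠ 0 := isUnit_iff_ne_zero.mp hT
  have hGd : G.det ≠ 0 := ne_of_gt hG.det_pos
  rw [lwPhi, lwPhi, LWaux4.lwF_map T hT U G, LWaux.ereal_two_mul_add_coe]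
  congr 1
  have hdet : (T * G * Tᵀ).det = T.det * G.det * T.det := by
    rw [Matrix.det_mul, Matrix.det_mul, Matrix.det_transpose]
  have hlog : Real.log ((T * G * Tᵀ).det)
      = Real.log G.det + 2 * Real.log |T.det| := by
    rw [hdet, Real.log_mul (mul_ne_zero hd hGd) hd, Real.log_mul hd hGd,
      ← Real.log_abs T.det]
    ring
  rw [hlog, LWaux.ereal_sub_coe_add]
end
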